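/- Let P₀, P₁ be the orthogonal projections of (ℂ²)^{⊗3} onto V₀ := span{|000⟩,|011⟩,|101⟩,|110⟩} and V₁ := span{|111⟩,|100⟩,|010⟩,|001⟩} respectively, and set M₀ := ĜP₀ and M₁ := ĜF̂P₁. Then M₀†M₀ + M₁†M₁ = I₈, i.e. M₀, M₁ are Kraus operators of a trace-preserving quantum operation (the decoder De₄ is a quantum channel). -/

import Mathlib

/- Common setup: (ℂ²)^{⊗n} is modeled as functions {0,1}ⁿ → ℂ, with computational
basis kets, outer products |u⟩⟨v|, and the partial trace over the i-th tensor factor. -/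

open Matrix
open scoped ComplexConjugate

noncomputable section

/-- The computational basis ket `|s⟩` for a bit string `s ∈ {0,1}ⁿ`. -/
def ket {n : ℕ} (s : Fin n → Fin 2) : (Fin n → Fin 2) → ℂ :=
  fun x => if x = s then 1 else 0

/-- The outer product `|u⟩⟨v|`. -/
def outer {ι : Type*} (u v : ι → ℂ) : Matrix ι ι ℂ :=
  Matrix.of fun i j => u i * conj (v j)

/-- The partial trace over the `i`-th tensor factor (the single deletion error `D_i`);
it satisfies `ptrace i (A₁ ⊗ ⋯ ⊗ Aₙ) = Tr(A_i) • A₁ ⊗ ⋯ ⊗ A_{i-1} ⊗ A_{i+1} ⊗ ⋯ ⊗ Aₙ`. -/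
def ptrace {m : ℕ} (i : Fin (m + 1))
    (A : Matrix (Fin (m + 1) → Fin 2) (Fin (m + 1) → Fin 2) ℂ) :
    Matrix (Fin m → Fin 2) (Fin m → Fin 2) ℂ :=
  Matrix.of fun y y' => ∑ b : Fin 2, A (i.insertNth b y) (i.insertNth b y')

/-- The operator `F̂ = |000⟩⟨111| + |011⟩⟨100| + |101⟩⟨010| + |110⟩⟨001|` (Step 2 of `De₄`). -/
def Fhat : Matrix (Fin 3 → Fin 2) (Fin 3 → Fin 2) ℂ :=
  outer (ket ![0,0,0]) (ket ![1,1,1]) + outer (ket ![0,1,1]) (ket ![1,0,0])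
    + outer (ket ![1,0,1]) (ket ![0,1,0]) + outer (ket ![1,1,0]) (ket ![0,0,1])

/-- `ω = e^{2πi/3}`, a primitive cube root of unity. -/
def omega : ℂ := Complex.exp (2 * (Real.pi : ℂ) * Complex.I / 3)

/-- `|1̄00⟩ = (|011⟩+|101⟩+|110⟩)/√3`. -/
def bar100 : (Fin 3 → Fin 2) → ℂ :=
  ((Real.sqrt 3 : ℂ))⁻¹ • (ket ![0,1,1] + ket ![1,0,1] + ket ![1,1,0])

/-- `|0̄10⟩ = (|011⟩+ω|101⟩+ω²|110⟩)/√3`. -/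
def bar010 : (Fin 3 → Fin 2) → ℂ :=
  ((Real.sqrt 3 : ℂ))⁻¹ • (ket ![0,1,1] + omega • ket ![1,0,1] + omega ^ 2 • ket ![1,1,0])

/-- `|0̄01⟩ = (|011⟩+ω²|101⟩+ω|110⟩)/√3`. -/
def bar001 : (Fin 3 → Fin 2) → ℂ :=
  ((Real.sqrt 3 : ℂ))⁻¹ • (ket ![0,1,1] + omega ^ 2 • ket ![1,0,1] + omega • ket ![1,1,0])

/-- The operator `Ĝ = |000⟩⟨000| + |100⟩⟨1̄00| + |010⟩⟨0̄10| + |011⟩⟨0̄01|` (Step 3 of `De₄`). -/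
def Ghat : Matrix (Fin 3 → Fin 2) (Fin 3 → Fin 2) ℂ :=
  outer (ket ![0,0,0]) (ket ![0,0,0]) + outer (ket ![1,0,0]) bar100
    + outer (ket ![0,1,0]) bar010 + outer (ket ![0,1,1]) bar001

/-- The orthogonal projection `P₀` onto `V₀ = span{|000⟩,|011⟩,|101⟩,|110⟩}`:
since these are orthonormal computational basis vectors, `P₀ = Σ |b⟩⟨b|` over them. -/
def P0 : Matrix (Fin 3 → Fin 2) (Fin 3 → Fin 2) ℂ :=
  outer (ket ![0,0,0]) (ket ![0,0,0]) + outer (ket ![0,1,1]) (ket ![0,1,1])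
    + outer (ket ![1,0,1]) (ket ![1,0,1]) + outer (ket ![1,1,0]) (ket ![1,1,0])

/-- The orthogonal projection `P₁` onto `V₁ = span{|111⟩,|100⟩,|010⟩,|001⟩}`. -/
def P1 : Matrix (Fin 3 → Fin 2) (Fin 3 → Fin 2) ℂ :=
  outer (ket ![1,1,1]) (ket ![1,1,1]) + outer (ket ![1,0,0]) (ket ![1,0,0])
    + outer (ket ![0,1,0]) (ket ![0,1,0]) + outer (ket ![0,0,1]) (ket ![0,0,1])

/-- The Kraus operator `M₀ = Ĝ P₀` of the decoder. -/
def M0 : Matrix (Fin 3 → Fin 2) (Fin 3 → Fin 2) ℂ := Ghat * P0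

/-- The Kraus operator `M₁ = Ĝ F̂ P₁` of the decoder. -/
def M1 : Matrix (Fin 3 → Fin 2) (Fin 3 → Fin 2) ℂ := Ghat * Fhat * P1


/-! ### Auxiliary lemmas -/

section Aux

lemma omega_prim : IsPrimitiveRoot omega 3 := by
  have := Complex.isPrimitiveRoot_exp 3 (by norm_num)
  convert this using 2
  simp only [omega, Nat.cast_ofNat]

lemma omega_cube : omega ^ 3 = 1 := omega_prim.pow_eq_one

lemma omega_sum : 1 + omega + omega ^ 2 = 0 := by
  have := omega_prim.geom_sum_eq_zero (by norm_num)
  simpa [Finset.sum_range_succ] using this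

lemma conj_omega : conj omega = omega ^ 2 := by
  have h1 : conj omega * omega = 1 := by
    rw [show omega = Complex.exp (2 * (Real.pi : ℂ) * Complex.I / 3) from rfl,
      ← Complex.exp_conj, ← Complex.exp_add]
    have : conj (2 * (Real.pi : ℂ) * Complex.I / 3) = -(2 * (Real.pi : ℂ) * Complex.I / 3) := by
      simp [map_div₀, Complex.conj_I, Complex.conj_ofReal, map_ofNat]
      ring
    rw [this]
    simp
  have h3 := omega_cube
  have h : conj omega * omega = omega ^ 2 * omega := by rw [h1, ← h3]; ring
  have hω : omega ≠ 0 := by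
    intro h0; rw [h0] at h3; simp at h3
  exact mul_right_cancel₀ hω h

lemma conj_s : conj ((Real.sqrt 3 : ℂ))⁻¹ = ((Real.sqrt 3 : ℂ))⁻¹ := by
  rw [map_inv₀, Complex.conj_ofReal]

lemma sq_s : ((Real.sqrt 3 : ℂ))⁻¹ * ((Real.sqrt 3 : ℂ))⁻¹ = 1 / 3 := by
  rw [← mul_inv]
  norm_cast
  rw [Real.mul_self_sqrt (by norm_num)]
  norm_num

lemma outer_add_right {ι : Type*} (u v w : ι → ℂ) :
    outer u (v + w) = outer u v + outer u w := by
  ext i j; simp [outer]; ring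

lemma outer_smul_right {ι : Type*} (c : ℂ) (u v : ι → ℂ) :
    outer u (c • v) = conj c • outer u v := by
  ext i j; simp [outer]; ring

lemma outer_add_left {ι : Type*} (u v w : ι → ℂ) :
    outer (u + v) w = outer u w + outer v w := by
  ext i j; simp [outer]; ring

lemma outer_smul_left {ι : Type*} (c : ℂ) (u v : ι → ℂ) :
    outer (c • u) v = c • outer u v := by
  ext i j; simp [outer]; ring

lemma outer_conjTranspose {ι : Type*} (u v : ι → ℂ) : (outer u v)ᴴ = outer v u := by
  ext i j; simp [outer, conjTranspose_apply]; ring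

lemma outer_ket_mul_ket {n : ℕ} (a b : (Fin n → Fin 2) → ℂ) (y z : Fin n → Fin 2) :
    outer a (ket y) * outer (ket z) b = if y = z then outer a b else 0 := by
  ext i j
  rw [Matrix.mul_apply]
  simp only [outer, ket, Matrix.of_apply, apply_ite conj, _root_.map_one, map_zero,
    mul_ite, ite_mul, one_mul, mul_one, zero_mul, mul_zero]
  by_cases h : y = z
  · subst h
    simp [Finset.sum_ite_eq, Finset.sum_ite_eq', outer]
  · rw [if_neg h]
    refine Eq.trans (Finset.sum_eq_zero fun k _ => ?_) (by simp)
    split_ifs <;> simp_all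

lemma vec_cases (i : Fin 3 → Fin 2) : i = ![0,0,0] ∨ i = ![0,0,1] ∨ i = ![0,1,0] ∨ i = ![0,1,1]
    ∨ i = ![1,0,0] ∨ i = ![1,0,1] ∨ i = ![1,1,0] ∨ i = ![1,1,1] := by
  revert i; decide

set_option maxHeartbeats 1000000 in
lemma one_eq : (1 : Matrix (Fin 3 → Fin 2) (Fin 3 → Fin 2) ℂ)
    = outer (ket ![0,0,0]) (ket ![0,0,0]) + outer (ket ![0,0,1]) (ket ![0,0,1])
      + outer (ket ![0,1,0]) (ket ![0,1,0]) + outer (ket ![0,1,1]) (ket ![0,1,1])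
      + outer (ket ![1,0,0]) (ket ![1,0,0]) + outer (ket ![1,0,1]) (ket ![1,0,1])
      + outer (ket ![1,1,0]) (ket ![1,1,0]) + outer (ket ![1,1,1]) (ket ![1,1,1]) := by
  ext i j
  rcases vec_cases i with rfl|rfl|rfl|rfl|rfl|rfl|rfl|rfl <;>
    rcases vec_cases j with rfl|rfl|rfl|rfl|rfl|rfl|rfl|rfl <;>
    simp (config := { decide := true }) [Matrix.one_apply, outer, ket]

end Aux

section Main

lemma bar100_eq : bar100 = ((Real.sqrt 3 : ℂ))⁻¹ • (ket ![0,1,1] + ket ![1,0,1] + ket ![1,1,0]) := rfl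
lemma bar010_eq : bar010 = ((Real.sqrt 3 : ℂ))⁻¹ • (ket ![0,1,1] + omega • ket ![1,0,1] + omega ^ 2 • ket ![1,1,0]) := rfl
lemma bar001_eq : bar001 = ((Real.sqrt 3 : ℂ))⁻¹ • (ket ![0,1,1] + omega ^ 2 • ket ![1,0,1] + omega • ket ![1,1,0]) := rfl
lemma P0_eq : P0 = outer (ket ![0,0,0]) (ket ![0,0,0]) + outer (ket ![0,1,1]) (ket ![0,1,1])
    + outer (ket ![1,0,1]) (ket ![1,0,1]) + outer (ket ![1,1,0]) (ket ![1,1,0]) := rfl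

set_option maxHeartbeats 1000000 in
lemma P0_mul_P0 : P0 * P0 = P0 := by
  rw [P0]
  simp (config := { decide := true }) only [add_mul, mul_add, outer_ket_mul_ket,
    if_true, if_false, add_zero, zero_add]

set_option maxHeartbeats 1000000 in
lemma P1_mul_P1 : P1 * P1 = P1 := by
  rw [P1]
  simp (config := { decide := true }) only [add_mul, mul_add, outer_ket_mul_ket,
    if_true, if_false, add_zero, zero_add]

lemma P0_herm : P0ᴴ = P0 := by
  rw [P0]
  simp only [conjTranspose_add, outer_conjTranspose]

lemma P1_herm : P1ᴴ = P1 := by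
  rw [P1]
  simp only [conjTranspose_add, outer_conjTranspose]

set_option maxHeartbeats 1000000 in
lemma P0_mul_Fhat : P0 * Fhat = Fhat := by
  rw [P0, Fhat]
  simp (config := { decide := true }) only [add_mul, mul_add, outer_ket_mul_ket,
    if_true, if_false, add_zero, zero_add]

set_option maxHeartbeats 1000000 in
lemma Fhat_herm_mul_Fhat : Fhatᴴ * Fhat = P1 := by
  rw [Fhat, P1]
  simp (config := { decide := true }) only [conjTranspose_add, outer_conjTranspose,
    add_mul, mul_add, outer_ket_mul_ket, if_true, if_false, add_zero, zero_add]

set_option maxHeartbeats 2000000 in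
set_option linter.unreachableTactic false in
set_option linter.unusedTactic false in
lemma Ghat_herm_mul_Ghat : Ghatᴴ * Ghat = P0 := by
  rw [Ghat]
  simp (config := { decide := true }) only [conjTranspose_add, outer_conjTranspose,
    add_mul, mul_add, outer_ket_mul_ket, if_true, if_false, add_zero, zero_add]
  rw [P0_eq, bar100_eq, bar010_eq, bar001_eq]
  simp only [outer_add_right, outer_smul_right, outer_add_left, outer_smul_left,
    conj_s, conj_omega, map_pow, _root_.map_mul, smul_smul, smul_add]
  match_scalars <;> first
    | ring1
    | linear_combination 3 * sq_s
    | linear_combination ((Real.sqrt 3 : ℂ))⁻¹ * ((Real.sqrt 3 : ℂ))⁻¹ * omega_sum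
    | linear_combination ((Real.sqrt 3 : ℂ))⁻¹ * ((Real.sqrt 3 : ℂ))⁻¹ * omega_sum + ((Real.sqrt 3 : ℂ))⁻¹ * ((Real.sqrt 3 : ℂ))⁻¹ * omega * omega_cube
    | linear_combination ((Real.sqrt 3 : ℂ))⁻¹ * ((Real.sqrt 3 : ℂ))⁻¹ * omega_sum + ((Real.sqrt 3 : ℂ))⁻¹ * ((Real.sqrt 3 : ℂ))⁻¹ * (omega + omega ^ 2) * omega_cube
    | linear_combination 3 * sq_s + ((Real.sqrt 3 : ℂ))⁻¹ * ((Real.sqrt 3 : ℂ))⁻¹ * (omega ^ 3 + 2) * omega_cube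
    | linear_combination (-3 : ℂ) * sq_s + (-1 : ℂ) * ((Real.sqrt 3 : ℂ))⁻¹ * ((Real.sqrt 3 : ℂ))⁻¹ * (omega ^ 3 + 2) * omega_cube
    | linear_combination (-1 : ℂ) * ((Real.sqrt 3 : ℂ))⁻¹ * ((Real.sqrt 3 : ℂ))⁻¹ * omega_sum
    | linear_combination (-1 : ℂ) * ((Real.sqrt 3 : ℂ))⁻¹ * ((Real.sqrt 3 : ℂ))⁻¹ * omega_sum + (-1 : ℂ) * ((Real.sqrt 3 : ℂ))⁻¹ * ((Real.sqrt 3 : ℂ))⁻¹ * omega * omega_cube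
    | linear_combination (-1 : ℂ) * ((Real.sqrt 3 : ℂ))⁻¹ * ((Real.sqrt 3 : ℂ))⁻¹ * omega_sum + (-1 : ℂ) * ((Real.sqrt 3 : ℂ))⁻¹ * ((Real.sqrt 3 : ℂ))⁻¹ * (omega + omega ^ 2) * omega_cube

set_option maxHeartbeats 1000000 in
lemma P0_add_P1 : P0 + P1 = 1 := by
  rw [P0, P1, one_eq]
  abel

end Main

/-- `M₀†M₀ + M₁†M₁ = I`, i.e. `M₀, M₁` are Kraus operators of a
trace-preserving quantum operation. -/
theorem decoder_trace_preserving :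
    M0ᴴ * M0 + M1ᴴ * M1 = (1 : Matrix (Fin 3 → Fin 2) (Fin 3 → Fin 2) ℂ) := by
  have h0 : M0ᴴ * M0 = P0 := by
    rw [M0, conjTranspose_mul, P0_herm, mul_assoc, ← mul_assoc Ghatᴴ, Ghat_herm_mul_Ghat,
      P0_mul_P0, P0_mul_P0]
  have hA : (Ghat * Fhat)ᴴ * (Ghat * Fhat) = P1 := by
    rw [conjTranspose_mul, mul_assoc, ← mul_assoc Ghatᴴ, Ghat_herm_mul_Ghat, P0_mul_Fhat,
      Fhat_herm_mul_Fhat]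
  have h1 : M1ᴴ * M1 = P1 := by
    rw [M1, conjTranspose_mul, P1_herm, mul_assoc, ← mul_assoc (Ghat * Fhat)ᴴ, hA,
      P1_mul_P1, P1_mul_P1]
  rw [h0, h1, P0_add_P1]

end
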